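/- Let U be a real-valued random variable with E[U] = 0 and probability density p. Let u_α be such that P(U² < u_α) = 1 − α. Then for any event Ω with P(Ω) ≥ 1 − α and E[U | Ω] = 0, we have E[U² | U² < u_α] ≤ E[U² | Ω]. -/

import Mathlib

open MeasureTheory ProbabilityTheory

/-- For a mean-zero real random variable `U` with density `p`, the
conditional second moment given the tail-truncation event `{U² < uα}` (of probability
`1 - α`) is at most the conditional second moment given any event `s` of probability
at least `1 - α` on which `U` still has conditional mean zero. -/
theorem stmt_0
    {Ω : Type*} [MeasurableSpace Ω] (μ : Measure Ω) [IsProbabilityMeasure μ]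
    (U : Ω → ℝ) (hU : Measurable U)
    (p : ℝ → ENNReal) (hp : μ.map U = (volume : Measure ℝ).withDensity p)
    (hUint : Integrable U μ)
    (hU2int : Integrable (fun ω => (U ω) ^ 2) μ)
    (hmean : ∫ ω, U ω ∂μ = 0)
    (α : ℝ) (hα : α ∈ Set.Ioo (0 : ℝ) 1)
    (uα : ℝ) (hquant : μ {ω | (U ω) ^ 2 < uα} = ENNReal.ofReal (1 - α))
    (s : Set Ω) (hs : MeasurableSet s)
    (hsprob : ENNReal.ofReal (1 - α) ≤ μ s)
    (hscond : ∫ ω, U ω ∂(μ[|s]) = 0) :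
    ∫ ω, (U ω) ^ 2 ∂(μ[|{ω | (U ω) ^ 2 < uα}]) ≤ ∫ ω, (U ω) ^ 2 ∂(μ[|s]) := by
  set A : Set Ω := {ω | (U ω) ^ 2 < uα} with hAdef
  have hA : MeasurableSet A := measurableSet_lt (hU.pow_const 2) measurable_const
  have hα1 : (0:ℝ) < 1 - α := by linarith [hα.2]
  -- uα > 0
  have huα : 0 < uα := by
    by_contra h
    push_neg at h
    have : A = ∅ := by
      ext ω
      simp only [hAdef, Set.mem_setOf_eq, Set.mem_empty_iff_false, iff_false, not_lt]
      nlinarith [sq_nonneg (U ω)]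
    rw [this, measure_empty] at hquant
    exact absurd hquant.symm (by simp [ENNReal.ofReal_eq_zero]; linarith)
  have hsfin : μ s ≠ ⊤ := measure_ne_top μ s
  set a : ℝ := (μ A).toReal with hadef
  set b : ℝ := (μ s).toReal with hbdef
  have ha : a = 1 - α := by rw [hadef, hquant, ENNReal.toReal_ofReal hα1.le]
  have hab : a ≤ b := by
    rw [hadef, hbdef]
    exact ENNReal.toReal_mono hsfin (hquant ▸ hsprob)
  have ha0 : 0 < a := ha ▸ hα1
  have hb0 : 0 < b := lt_of_lt_of_le ha0 hab
  -- integrability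
  have hI : ∀ t : Set Ω, IntegrableOn (fun ω => (U ω)^2) t μ := fun t => hU2int.integrableOn
  have hC : ∀ t : Set Ω, IntegrableOn (fun _ : Ω => uα) t μ := fun t =>
    integrableOn_const (measure_lt_top μ t).ne
  -- splits
  have hsplitS : ∫ ω in s ∩ A, (U ω)^2 ∂μ + ∫ ω in s \ A, (U ω)^2 ∂μ
      = ∫ ω in s, (U ω)^2 ∂μ := integral_inter_add_diff hA (hI s)
  have hsplitA : ∫ ω in A ∩ s, (U ω)^2 ∂μ + ∫ ω in A \ s, (U ω)^2 ∂μ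
      = ∫ ω in A, (U ω)^2 ∂μ := integral_inter_add_diff hs (hI A)
  have hinter : A ∩ s = s ∩ A := Set.inter_comm A s
  -- pointwise bounds
  have hbound1 : ∫ ω in s \ A, (U ω)^2 ∂μ ≥ uα * (μ (s \ A)).toReal := by
    have := setIntegral_mono_on (hC (s \ A)) (hI (s \ A)) (hs.diff hA)
      (fun x hx => by
        have : ¬ (U x)^2 < uα := hx.2
        linarith [not_lt.1 this])
    simpa [setIntegral_const, mul_comm, measureReal_def] using this
  have hbound2 : ∫ ω in A \ s, (U ω)^2 ∂μ ≤ uα * (μ (A \ s)).toReal := by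
    have := setIntegral_mono_on (hI (A \ s)) (hC (A \ s)) (hA.diff hs)
      (fun x hx => le_of_lt hx.1)
    simpa [setIntegral_const, mul_comm, measureReal_def] using this
  have hboundA : ∫ ω in A, (U ω)^2 ∂μ ≤ uα * a := by
    have := setIntegral_mono_on (hI A) (hC A) hA (fun x hx => le_of_lt hx)
    simpa [setIntegral_const, mul_comm, hadef, measureReal_def] using this
  -- measure additivity
  have hmA : (μ (A ∩ s)).toReal + (μ (A \ s)).toReal = a := by
    rw [hadef, ← ENNReal.toReal_add (measure_ne_top _ _) (measure_ne_top _ _),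
      measure_inter_add_diff A hs]
  have hmS : (μ (s ∩ A)).toReal + (μ (s \ A)).toReal = b := by
    rw [hbdef, ← ENNReal.toReal_add (measure_ne_top _ _) (measure_ne_top _ _),
      measure_inter_add_diff s hA]
  -- key inequality: IS - IA ≥ uα * (b - a)
  have hkey : ∫ ω in s, (U ω)^2 ∂μ - ∫ ω in A, (U ω)^2 ∂μ ≥ uα * (b - a) := by
    rw [Set.inter_comm A s] at hmA
    have hd : (μ (s \ A)).toReal - (μ (A \ s)).toReal = b - a := by linarith
    have hmul : uα * (b - a) = uα * (μ (s \ A)).toReal - uα * (μ (A \ s)).toReal := by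
      rw [← hd]; ring
    rw [← hsplitS, ← hsplitA, hinter]
    linarith
  have hIA0 : 0 ≤ ∫ ω in A, (U ω)^2 ∂μ :=
    setIntegral_nonneg hA (fun x _ => sq_nonneg _)
  -- rewrite conditional integrals
  rw [ProbabilityTheory.cond, ProbabilityTheory.cond, integral_smul_measure,
    integral_smul_measure]
  simp only [ENNReal.toReal_inv, smul_eq_mul, ← hAdef]
  rw [← hadef, ← hbdef, inv_mul_eq_div, inv_mul_eq_div, div_le_div_iff₀ ha0 hb0]
  nlinarith [hkey, hboundA, hab, hb0, hIA0]
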